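/- arXiv:0802.0981 — 10 statements merged into one kernel-verified Lean document; each statement's English description precedes it below -/
import Mathlib

section
/- Let (X,τ) be a topological space and φ₁, φ₂ operations on X. If φ₂ is regular with respect to the family of φ₁-open sets, then the family of φ₁₂-open subsets of X is a topology on X (it contains ∅ and X and is closed under arbitrary unions and finite intersections), and a subset K of X is closed with respect to this topology if and only if φ₁₂cl K ⊆ K. -/
open Set

/-- An operation on a topological space `X`: a map `φ : Set X → Set X` with
`interior A ⊆ φ A` for all `A` and `φ ∅ = ∅`. -/
def IsOperation {X : Type*} [TopologicalSpace X] (φ : Set X → Set X) : Prop :=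
  (∀ A : Set X, interior A ⊆ φ A) ∧ φ ∅ = ∅

/-- `A` is `φ`-open if `A ⊆ φ A`. -/
def PhiOpen {X : Type*} (φ : Set X → Set X) (A : Set X) : Prop := A ⊆ φ A

/-- `φ₁₂`-interior: `x ∈ φ₁₂int A` iff there is a `φ₁`-open `U` with `x ∈ U` and `φ₂ U ⊆ A`. -/
def PhiInt {X : Type*} (φ₁ φ₂ : Set X → Set X) (A : Set X) : Set X :=
  {x | ∃ U : Set X, PhiOpen φ₁ U ∧ x ∈ U ∧ φ₂ U ⊆ A}

/-- `φ₁₂`-closure: `x ∈ φ₁₂cl A` iff `φ₂ U ∩ A ≠ ∅` for every `φ₁`-open `U` containing `x`. -/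
def PhiCl {X : Type*} (φ₁ φ₂ : Set X → Set X) (A : Set X) : Set X :=
  {x | ∀ U : Set X, PhiOpen φ₁ U → x ∈ U → (φ₂ U ∩ A).Nonempty}

/-- `A` is `φ₁₂`-open if `A ⊆ φ₁₂int A`. -/
def Phi12Open {X : Type*} (φ₁ φ₂ : Set X → Set X) (A : Set X) : Prop :=
  A ⊆ PhiInt φ₁ φ₂ A

/-- `φ₂` is regular w.r.t. the family of `φ₁`-open sets. -/
def PhiRegular {X : Type*} (φ₂ φ₁ : Set X → Set X) : Prop :=
  ∀ x : X, ∀ U V : Set X, PhiOpen φ₁ U → PhiOpen φ₁ V → x ∈ U → x ∈ V →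
    ∃ W : Set X, PhiOpen φ₁ W ∧ x ∈ W ∧ φ₂ W ⊆ φ₂ U ∩ φ₂ V

/-- A filter `F` `φ₁₂`-converges to `a` if for every `φ₁`-open `U` containing `a`
there is `S ∈ F` with `S ⊆ φ₂ U`. -/
def PhiConv {X : Type*} (φ₁ φ₂ : Set X → Set X) (F : Filter X) (a : X) : Prop :=
  ∀ U : Set X, PhiOpen φ₁ U → a ∈ U → ∃ S ∈ F, S ⊆ φ₂ U

/-- A filter `F` `φ₁₂`-accumulates to `a` if `a ∈ φ₁₂cl S` for every `S ∈ F`. -/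
def PhiAcc {X : Type*} (φ₁ φ₂ : Set X → Set X) (F : Filter X) (a : X) : Prop :=
  ∀ S ∈ F, a ∈ PhiCl φ₁ φ₂ S

/-- `X` is `φ₁₂`-T₂. -/
def PhiT2 {X : Type*} (φ₁ φ₂ : Set X → Set X) : Prop :=
  ∀ x y : X, x ≠ y → ∃ U V : Set X, PhiOpen φ₁ U ∧ PhiOpen φ₁ V ∧
    x ∈ U ∧ y ∈ V ∧ φ₂ U ∩ φ₂ V = ∅

/-- `A` is `φ₁₂`-compact relative to `X`. -/
def PhiCompact {X : Type*} (φ₁ φ₂ : Set X → Set X) (A : Set X) : Prop :=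
  ∀ 𝒰 : Set (Set X), (∀ U ∈ 𝒰, PhiOpen φ₁ U) → A ⊆ ⋃₀ 𝒰 →
    ∃ 𝒰' ⊆ 𝒰, 𝒰'.Finite ∧ A ⊆ ⋃ U ∈ 𝒰', φ₂ U

/-- If `φ₂` is regular w.r.t. the `φ₁`-open sets, then the `φ₁₂`-open sets
form a topology (contain `∅`, `X`, closed under arbitrary unions and finite intersections),
and `K` is closed w.r.t. this topology iff `φ₁₂cl K ⊆ K`. -/
theorem stmt_1 {X : Type*} [TopologicalSpace X] (φ₁ φ₂ : Set X → Set X)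
    (h₁ : IsOperation φ₁) (h₂ : IsOperation φ₂)
    (hreg : PhiRegular φ₂ φ₁) :
    (Phi12Open φ₁ φ₂ (∅ : Set X) ∧ Phi12Open φ₁ φ₂ (Set.univ : Set X) ∧
      (∀ 𝒮 : Set (Set X), (∀ A ∈ 𝒮, Phi12Open φ₁ φ₂ A) → Phi12Open φ₁ φ₂ (⋃₀ 𝒮)) ∧
      (∀ A B : Set X, Phi12Open φ₁ φ₂ A → Phi12Open φ₁ φ₂ B → Phi12Open φ₁ φ₂ (A ∩ B))) ∧
    (∀ K : Set X, Phi12Open φ₁ φ₂ Kᶜ ↔ PhiCl φ₁ φ₂ K ⊆ K) := by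
  have huniv : PhiOpen φ₁ (Set.univ : Set X) := by
    intro x _
    exact h₁.1 Set.univ (by simp)
  refine ⟨⟨?_, ?_, ?_, ?_⟩, ?_⟩
  · intro x hx; exact absurd hx (Set.notMem_empty x)
  · intro x _
    exact ⟨Set.univ, huniv, trivial, Set.subset_univ _⟩
  · intro 𝒮 h𝒮 x hx
    obtain ⟨A, hA, hxA⟩ := hx
    obtain ⟨U, hU, hxU, hsub⟩ := h𝒮 A hA hxA
    exact ⟨U, hU, hxU, hsub.trans (Set.subset_sUnion_of_mem hA)⟩
  · intro A B hA hB x hx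
    obtain ⟨U, hU, hxU, hUs⟩ := hA hx.1
    obtain ⟨V, hV, hxV, hVs⟩ := hB hx.2
    obtain ⟨W, hW, hxW, hWs⟩ := hreg x U V hU hV hxU hxV
    exact ⟨W, hW, hxW, fun y hy => ⟨hUs (hWs hy).1, hVs (hWs hy).2⟩⟩
  · intro K
    constructor
    · intro h x hx
      by_contra hxK
      obtain ⟨U, hU, hxU, hsub⟩ := h hxK
      obtain ⟨y, hy⟩ := hx U hU hxU
      exact hsub hy.1 hy.2
    · intro h x hx
      have : x ∉ PhiCl φ₁ φ₂ K := fun hc => hx (h hc)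
      simp only [PhiCl, Set.mem_setOf_eq, not_forall] at this
      obtain ⟨U, hU, hxU, hne⟩ := this
      refine ⟨U, hU, hxU, fun y hy hyK => ?_⟩
      exact hne ⟨y, hy, hyK⟩
end

section
/- Let (X,τ) be a topological space and φ₁, φ₂ operations on X. If φ₂ is regular with respect to the family of φ₁-open sets and either φ₂(A) ⊇ A for all A ⊆ X or φ₂(A) ⊇ φ₁(A) for all A ⊆ X, then a subset K of X satisfies φ₁₂cl K ⊆ K if and only if φ₁₂cl K = K; consequently the closed sets of the topology of φ₁₂-open sets are exactly the sets K with φ₁₂cl K = K. -/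
open Set

/-- If `φ₂` is regular w.r.t. the `φ₁`-open sets and (`φ₂ ≥ ι` or `φ₂ ≥ φ₁`),
then `φ₁₂cl K ⊆ K ↔ φ₁₂cl K = K`, and the closed sets of the topology of `φ₁₂`-open sets
are exactly the sets `K` with `φ₁₂cl K = K`. -/
theorem stmt_2 {X : Type*} [TopologicalSpace X] (φ₁ φ₂ : Set X → Set X)
    (h₁ : IsOperation φ₁) (h₂ : IsOperation φ₂)
    (hreg : PhiRegular φ₂ φ₁)
    (hge : (∀ A : Set X, A ⊆ φ₂ A) ∨ (∀ A : Set X, φ₁ A ⊆ φ₂ A)) :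
    (∀ K : Set X, PhiCl φ₁ φ₂ K ⊆ K ↔ PhiCl φ₁ φ₂ K = K) ∧
    (∀ K : Set X, Phi12Open φ₁ φ₂ Kᶜ ↔ PhiCl φ₁ φ₂ K = K) := by
  have hsub : ∀ K : Set X, K ⊆ PhiCl φ₁ φ₂ K := by
    intro K x hx U hU hxU
    refine ⟨x, ?_, hx⟩
    rcases hge with h | h
    · exact h U hxU
    · exact h U (hU hxU)
  have hiff : ∀ K : Set X, PhiCl φ₁ φ₂ K ⊆ K ↔ PhiCl φ₁ φ₂ K = K := by
    intro K
    constructor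
    · intro h; exact Set.Subset.antisymm h (hsub K)
    · intro h; exact h.le
  refine ⟨hiff, fun K => ?_⟩
  rw [← hiff]
  constructor
  · intro hop x hx
    by_contra hxK
    rcases hop hxK with ⟨U, hU, hxU, hUsub⟩
    rcases hx U hU hxU with ⟨y, hy1, hy2⟩
    exact hUsub hy1 hy2
  · intro hcl x hx
    have hxcl : x ∉ PhiCl φ₁ φ₂ K := fun h => hx (hcl h)
    simp only [PhiCl, Set.mem_setOf_eq, not_forall] at hxcl
    rcases hxcl with ⟨U, hU, hxU, hne⟩
    refine ⟨U, hU, hxU, fun y hy => ?_⟩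
    intro hyK
    exact hne ⟨y, hy, hyK⟩
end

section
/- Let (X,τ) be a topological space, φ₁, φ₂ operations on X with φ₂ regular with respect to the family of φ₁-open sets, ℱ a proper filter on X, and a ∈ X. Then ℱ φ₁₂-accumulates to a if and only if there exists a proper filter ℱ' on X with ℱ ⊆ ℱ' such that ℱ' φ₁₂-converges to a. -/
open Set

/-- If `φ₂` is regular w.r.t. the `φ₁`-open sets, a proper filter `F`
`φ₁₂`-accumulates to `a` iff there is a finer proper filter `F'` that `φ₁₂`-converges to `a`. -/
theorem stmt_5 {X : Type*} [TopologicalSpace X] (φ₁ φ₂ : Set X → Set X)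
    (h₁ : IsOperation φ₁) (h₂ : IsOperation φ₂)
    (hreg : PhiRegular φ₂ φ₁)
    (F : Filter X) (hF : F.NeBot) (a : X) :
    PhiAcc φ₁ φ₂ F a ↔
      ∃ F' : Filter X, F'.NeBot ∧ (∀ S ∈ F, S ∈ F') ∧ PhiConv φ₁ φ₂ F' a := by
  have hunivOpen : PhiOpen φ₁ (univ : Set X) := by
    intro x hx
    have := h₁.1 univ
    rw [interior_univ] at this
    exact this hx
  have hφ₂univ : (univ : Set X) ⊆ φ₂ univ := by
    have := h₂.1 univ
    rwa [interior_univ] at this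
  constructor
  · intro hacc
    let F' : Filter X :=
      { sets := {T | ∃ S ∈ F, ∃ U : Set X, PhiOpen φ₁ U ∧ a ∈ U ∧ S ∩ φ₂ U ⊆ T}
        univ_sets := ⟨univ, Filter.univ_mem, univ, hunivOpen, mem_univ a, subset_univ _⟩
        sets_of_superset := by
          rintro T T' ⟨S, hS, U, hU, haU, hsub⟩ hTT'
          exact ⟨S, hS, U, hU, haU, hsub.trans hTT'⟩
        inter_sets := by
          rintro T T' ⟨S, hS, U, hU, haU, hsub⟩ ⟨S', hS', U', hU', haU', hsub'⟩
          obtain ⟨W, hW, haW, hWsub⟩ := hreg a U U' hU hU' haU haU'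
          refine ⟨S ∩ S', F.inter_mem hS hS', W, hW, haW, ?_⟩
          rintro x ⟨⟨hx1, hx2⟩, hx3⟩
          exact ⟨hsub ⟨hx1, (hWsub hx3).1⟩, hsub' ⟨hx2, (hWsub hx3).2⟩⟩ }
    have hmem : ∀ T : Set X, T ∈ F' ↔
        ∃ S ∈ F, ∃ U : Set X, PhiOpen φ₁ U ∧ a ∈ U ∧ S ∩ φ₂ U ⊆ T :=
      fun T => Iff.rfl
    refine ⟨F', ?_, ?_, ?_⟩
    · constructor
      intro hbot
      have hempty : (∅ : Set X) ∈ F' := hbot ▸ Filter.mem_bot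
      obtain ⟨S, hS, U, hU, haU, hsub⟩ := (hmem _).1 hempty
      obtain ⟨x, hx⟩ := hacc S hS U hU haU
      exact hsub ⟨hx.2, hx.1⟩
    · intro S hS
      exact (hmem _).2 ⟨S, hS, univ, hunivOpen, mem_univ a, fun x hx => hx.1⟩
    · intro U hU haU
      exact ⟨φ₂ U, (hmem _).2 ⟨univ, Filter.univ_mem, U, hU, haU, fun x hx => hx.2⟩,
        subset_rfl⟩
  · rintro ⟨F', hF', hle, hconv⟩
    intro S hS U hU haU
    obtain ⟨T, hT, hTsub⟩ := hconv U hU haU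
    have : (T ∩ S).Nonempty := Filter.nonempty_of_mem (F'.inter_mem hT (hle S hS))
    obtain ⟨x, hx1, hx2⟩ := this
    exact ⟨x, hTsub hx1, hx2⟩
end

section
/- Let (X,τ) be a topological space, φ₁, φ₂ operations on X, ℱ an ultrafilter on X, and a ∈ X. If ℱ φ₁₂-accumulates to a, then ℱ φ₁₂-converges to a. -/
open Set

/-- If an ultrafilter `φ₁₂`-accumulates to `a`, then it `φ₁₂`-converges to `a`. -/
theorem stmt_6 {X : Type*} [TopologicalSpace X] (φ₁ φ₂ : Set X → Set X)
    (h₁ : IsOperation φ₁) (h₂ : IsOperation φ₂)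
    (F : Ultrafilter X) (a : X)
    (hacc : PhiAcc φ₁ φ₂ (F : Filter X) a) : PhiConv φ₁ φ₂ (F : Filter X) a := by
  intro U hU haU
  rcases F.mem_or_compl_mem (φ₂ U) with h | h
  · exact ⟨φ₂ U, h, subset_rfl⟩
  · obtain ⟨x, hx1, hx2⟩ := hacc _ h U hU haU
    exact absurd hx1 hx2
end

section
/- Let (X,τ) be a topological space and φ₁, φ₂ operations on X such that X is φ₁₂-T₂. If a proper filter ℱ on X φ₁₂-converges to a point a ∈ X and φ₁₂-accumulates to a point b ∈ X, then a = b. -/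
open Set

/-- In a `φ₁₂`-T₂ space, if a proper filter `φ₁₂`-converges to `a`
and `φ₁₂`-accumulates to `b`, then `a = b`. -/
theorem stmt_8 {X : Type*} [TopologicalSpace X] (φ₁ φ₂ : Set X → Set X)
    (h₁ : IsOperation φ₁) (h₂ : IsOperation φ₂)
    (hT2 : PhiT2 φ₁ φ₂)
    (F : Filter X) (hF : F.NeBot) (a b : X)
    (hconv : PhiConv φ₁ φ₂ F a) (hacc : PhiAcc φ₁ φ₂ F b) : a = b := by
  by_contra hne
  obtain ⟨U, V, hU, hV, haU, hbV, hdisj⟩ := hT2 a b hne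
  obtain ⟨S, hSF, hSU⟩ := hconv U hU haU
  obtain ⟨x, hxV, hxS⟩ := hacc S hSF V hV hbV
  exact absurd hdisj (Set.nonempty_iff_ne_empty.mp ⟨x, hSU hxS, hxV⟩)
end

section
/- Let (X,τ) be a topological space, φ₁, φ₂ operations on X with φ₂ regular with respect to the family of φ₁-open sets, A ⊆ X and a ∈ X. If a ∈ φ₁₂cl A, then there exists a proper filter ℱ on X with A ∈ ℱ that φ₁₂-converges to a. -/
open Set

/-- If `φ₂` is regular w.r.t. the `φ₁`-open sets and `a ∈ φ₁₂cl A`,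
then there is a proper filter containing `A` that `φ₁₂`-converges to `a`. -/
theorem stmt_11 {X : Type*} [TopologicalSpace X] (φ₁ φ₂ : Set X → Set X)
    (h₁ : IsOperation φ₁) (h₂ : IsOperation φ₂)
    (hreg : PhiRegular φ₂ φ₁)
    (A : Set X) (a : X) (ha : a ∈ PhiCl φ₁ φ₂ A) :
    ∃ F : Filter X, F.NeBot ∧ A ∈ F ∧ PhiConv φ₁ φ₂ F a := by
  have huniv : PhiOpen φ₁ (univ : Set X) := by
    intro x _
    have := h₁.1 univ
    rw [interior_univ] at this
    exact this (mem_univ x)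
  let B : FilterBasis X :=
    { sets := {s | ∃ U : Set X, PhiOpen φ₁ U ∧ a ∈ U ∧ s = φ₂ U ∩ A}
      nonempty := ⟨φ₂ univ ∩ A, univ, huniv, mem_univ a, rfl⟩
      inter_sets := by
        rintro s t ⟨U, hU, haU, rfl⟩ ⟨V, hV, haV, rfl⟩
        obtain ⟨W, hW, haW, hsub⟩ := hreg a U V hU hV haU haV
        exact ⟨φ₂ W ∩ A, ⟨W, hW, haW, rfl⟩, fun x hx =>
          ⟨⟨(hsub hx.1).1, hx.2⟩, (hsub hx.1).2, hx.2⟩⟩ }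
  refine ⟨B.filter, ?_, ?_, ?_⟩
  · constructor
    intro hbot
    have : (∅ : Set X) ∈ B.filter := by rw [hbot]; exact Filter.mem_bot
    obtain ⟨s, ⟨U, hU, haU, rfl⟩, hsub⟩ := B.mem_filter_iff.mp this
    obtain ⟨x, hx⟩ := ha U hU haU
    exact hsub hx
  · exact B.mem_filter_iff.mpr ⟨φ₂ univ ∩ A, ⟨univ, huniv, mem_univ a, rfl⟩,
      fun x hx => hx.2⟩
  · intro U hU haU
    exact ⟨φ₂ U ∩ A, B.mem_filter_iff.mpr ⟨_, ⟨U, hU, haU, rfl⟩, subset_rfl⟩,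
      fun x hx => hx.1⟩
end

section
/- Let (X,τ) be a topological space, φ₁, φ₂ operations on X with φ₂ regular with respect to the family of φ₁-open sets, and A ⊆ X. Then A is φ₁₂-closed if and only if for every proper filter ℱ on X with A ∈ ℱ and every a ∈ X, if ℱ φ₁₂-converges to a then a ∈ A. -/
open Set

/-- If `φ₂` is regular w.r.t. the `φ₁`-open sets, then `A` is `φ₁₂`-closed
iff every proper filter containing `A` that `φ₁₂`-converges to some `a` satisfies `a ∈ A`. -/
theorem stmt_12 {X : Type*} [TopologicalSpace X] (φ₁ φ₂ : Set X → Set X)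
    (h₁ : IsOperation φ₁) (h₂ : IsOperation φ₂)
    (hreg : PhiRegular φ₂ φ₁) (A : Set X) :
    PhiCl φ₁ φ₂ A ⊆ A ↔
      ∀ F : Filter X, F.NeBot → A ∈ F → ∀ a : X, PhiConv φ₁ φ₂ F a → a ∈ A := by
  constructor
  · intro hcl F hF hA a hconv
    apply hcl
    intro U hU haU
    obtain ⟨S, hSF, hSU⟩ := hconv U hU haU
    have : (S ∩ A).Nonempty := Filter.nonempty_of_mem (F.inter_mem hSF hA)
    exact this.mono (Set.inter_subset_inter_left A hSU)
  · intro hfil x hx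
    have hXopen : PhiOpen φ₁ (Set.univ : Set X) := by
      intro y _
      exact h₁.1 Set.univ (by simp)
    set S : Set (Set X) := {s | ∃ U : Set X, PhiOpen φ₁ U ∧ x ∈ U ∧ s = φ₂ U ∩ A} with hS
    -- finite intersections of S contain some φ₂ W ∩ A
    have key : ∀ t : Set (Set X), t.Finite → t ⊆ S →
        ∃ W : Set X, PhiOpen φ₁ W ∧ x ∈ W ∧ φ₂ W ∩ A ⊆ ⋂₀ t := by
      intro t ht
      refine Set.Finite.induction_on (motive := fun t _ => t ⊆ S →
          ∃ W : Set X, PhiOpen φ₁ W ∧ x ∈ W ∧ φ₂ W ∩ A ⊆ ⋂₀ t) t ht ?_ ?_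
      · intro _
        exact ⟨Set.univ, hXopen, Set.mem_univ x, by simp⟩
      · intro s t' _ _ ih hins
        obtain ⟨W, hW, hxW, hWt⟩ := ih (fun u hu => hins (Set.mem_insert_of_mem s hu))
        obtain ⟨U, hU, hxU, rfl⟩ := hins (Set.mem_insert s t')
        obtain ⟨V, hV, hxV, hVsub⟩ := hreg x U W hU hW hxU hxW
        refine ⟨V, hV, hxV, ?_⟩
        intro y hy
        rw [Set.sInter_insert]
        have h1 := hVsub hy.1
        exact ⟨⟨h1.1, hy.2⟩, hWt ⟨h1.2, hy.2⟩⟩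
    refine hfil (Filter.generate S) ?_ ?_ x ?_
    · rw [Filter.generate_neBot_iff]
      intro t hts htfin
      obtain ⟨W, hW, hxW, hWt⟩ := key t htfin hts
      exact ((hx W hW hxW).mono hWt)
    · have : φ₂ Set.univ ∩ A ∈ S := ⟨Set.univ, hXopen, Set.mem_univ x, rfl⟩
      exact Filter.mem_of_superset (Filter.mem_generate_of_mem this) Set.inter_subset_right
    · intro U hU hxU
      exact ⟨φ₂ U ∩ A, Filter.mem_generate_of_mem ⟨U, hU, hxU, rfl⟩, Set.inter_subset_left⟩
end

section
/- Let (X,τ) be a topological space, φ₁, φ₂ operations on X, and A ⊆ X. Then A is φ₁₂-compact if and only if every proper filter ℱ on X that meets A (i.e., F ∩ A ≠ ∅ for every F ∈ ℱ) φ₁₂-accumulates to some point of A. -/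
open Set

/-- `A` is `φ₁₂`-compact iff every proper filter meeting `A`
`φ₁₂`-accumulates to some point of `A`. -/
theorem stmt_14 {X : Type*} [TopologicalSpace X] (φ₁ φ₂ : Set X → Set X)
    (h₁ : IsOperation φ₁) (h₂ : IsOperation φ₂) (A : Set X) :
    PhiCompact φ₁ φ₂ A ↔
      ∀ F : Filter X, F.NeBot → (∀ S ∈ F, (S ∩ A).Nonempty) →
        ∃ a ∈ A, PhiAcc φ₁ φ₂ F a := by
  constructor
  · intro hc F hF hmeet
    by_contra hno
    push_neg at hno
    have hpt : ∀ a ∈ A, ∃ U : Set X, ∃ S ∈ F, PhiOpen φ₁ U ∧ a ∈ U ∧ φ₂ U ∩ S = ∅ := by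
      intro a ha
      obtain ⟨S, hS, hacl⟩ := not_forall₂.mp (hno a ha)
      simp only [PhiCl, mem_setOf_eq] at hacl
      push_neg at hacl
      obtain ⟨U, hU, haU, hne⟩ := hacl
      exact ⟨U, S, hS, hU, haU, hne⟩
    choose U S hSF hUop haU hdisj using hpt
    obtain ⟨𝒰', h𝒰'sub, h𝒰'fin, hcov⟩ :=
      hc {V | ∃ a, ∃ ha : a ∈ A, V = U a ha}
        (by rintro V ⟨a, ha, rfl⟩; exact hUop a ha)
        (by intro x hx; exact ⟨U x hx, ⟨x, hx, rfl⟩, haU x hx⟩)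
    have hchoice : ∀ V : Set X, ∃ T ∈ F, (V ∈ 𝒰' → φ₂ V ∩ T = ∅) := by
      intro V
      by_cases hV : V ∈ 𝒰'
      · obtain ⟨a, ha, rfl⟩ := h𝒰'sub hV
        exact ⟨S a ha, hSF a ha, fun _ => hdisj a ha⟩
      · exact ⟨univ, Filter.univ_mem, fun h => absurd h hV⟩
    choose T hTF hTd using hchoice
    have hSmem : (⋂ V ∈ 𝒰', T V) ∈ F :=
      (Filter.biInter_mem h𝒰'fin).mpr fun V _ => hTF V
    obtain ⟨x, hxS, hxA⟩ := hmeet _ hSmem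
    obtain ⟨_, ⟨V, rfl⟩, _, ⟨hV, rfl⟩, hxV⟩ := hcov hxA
    have hx2 : x ∈ T V := mem_iInter₂.mp hxS V hV
    have : x ∈ φ₂ V ∩ T V := ⟨hxV, hx2⟩
    rw [hTd V hV] at this
    exact this
  · intro hfil 𝒰 hop hcov
    by_contra hnc
    push_neg at hnc
    -- every finite subfamily fails to φ₂-cover A
    have hne : ∀ t : Set (Set X), t ⊆ 𝒰 → t.Finite → (A \ ⋃ U ∈ t, φ₂ U).Nonempty := by
      intro t ht htf
      obtain ⟨x, hx, hxn⟩ := not_subset.mp (hnc t ht htf)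
      exact ⟨x, hx, hxn⟩
    set g : Set (Set X) := {B | ∃ t ⊆ 𝒰, t.Finite ∧ B = A \ ⋃ U ∈ t, φ₂ U} with hg
    set F : Filter X := Filter.generate g with hFdef
    have hbase : ∀ S ∈ F, ∃ t ⊆ 𝒰, t.Finite ∧ (A \ ⋃ U ∈ t, φ₂ U) ⊆ S := by
      intro S hS
      rw [hFdef, Filter.mem_generate_iff] at hS
      obtain ⟨τ, hτg, hτfin, hτS⟩ := hS
      have : ∀ b ∈ τ, ∃ t ⊆ 𝒰, t.Finite ∧ b = A \ ⋃ U ∈ t, φ₂ U := fun b hb => hτg hb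
      choose tb htb𝒰 htbfin hbeq using this
      refine ⟨⋃ b ∈ τ, tb b ‹b ∈ τ›, ?_, ?_, ?_⟩
      · intro U hU
        simp only [mem_iUnion] at hU
        obtain ⟨b, hb, hUb⟩ := hU
        exact htb𝒰 b hb hUb
      · exact hτfin.biUnion' fun b hb => htbfin b hb
      · intro x hx
        apply hτS
        intro b hb
        rw [hbeq b hb]
        refine ⟨hx.1, ?_⟩
        intro hxmem
        apply hx.2
        simp only [mem_iUnion] at hxmem ⊢
        obtain ⟨U, hU, hxU⟩ := hxmem
        exact ⟨U, ⟨b, hb, hU⟩, hxU⟩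
    have hmeet : ∀ S ∈ F, (S ∩ A).Nonempty := by
      intro S hS
      obtain ⟨t, ht𝒰, htf, hts⟩ := hbase S hS
      obtain ⟨x, hxA, hxn⟩ := hne t ht𝒰 htf
      exact ⟨x, hts ⟨hxA, hxn⟩, hxA⟩
    have hFne : F.NeBot := by
      refine Filter.neBot_iff.mpr fun hbot => ?_
      obtain ⟨x, hx, _⟩ := hmeet ∅ (by rw [hbot]; exact Filter.mem_bot)
      exact hx
    obtain ⟨a, haA, hacc⟩ := hfil F hFne hmeet
    obtain ⟨V, hV𝒰, haV⟩ := hcov haA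
    have hgen : (A \ ⋃ U ∈ ({V} : Set (Set X)), φ₂ U) ∈ F :=
      Filter.mem_generate_of_mem ⟨{V}, by simpa using hV𝒰, Set.finite_singleton V, rfl⟩
    obtain ⟨y, hy1, hy2⟩ := hacc _ hgen V (hop V hV𝒰) haV
    apply hy2.2
    simp only [mem_singleton_iff, iUnion_iUnion_eq_left]
    exact hy1
end

section
/- Let (X,τ) be a topological space, φ₁, φ₂ operations on X, and A ⊆ X. Then A is φ₁₂-compact if and only if every ultrafilter ℱ on X that meets A (i.e., F ∩ A ≠ ∅ for every F ∈ ℱ) φ₁₂-converges to some point of A. -/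
open Set

/-- `A` is `φ₁₂`-compact iff every ultrafilter meeting `A`
`φ₁₂`-converges to some point of `A`. -/
theorem stmt_15 {X : Type*} [TopologicalSpace X] (φ₁ φ₂ : Set X → Set X)
    (h₁ : IsOperation φ₁) (h₂ : IsOperation φ₂) (A : Set X) :
    PhiCompact φ₁ φ₂ A ↔
      ∀ F : Ultrafilter X, (∀ S ∈ (F : Filter X), (S ∩ A).Nonempty) →
        ∃ a ∈ A, PhiConv φ₁ φ₂ (F : Filter X) a := by
  constructor
  · intro hc F hmeet
    by_contra h
    push_neg at h
    -- for each a ∈ A pick a φ₁-open U with a ∈ U and φ₂ U ∉ F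
    have key : ∀ a ∈ A, ∃ U : Set X, PhiOpen φ₁ U ∧ a ∈ U ∧ φ₂ U ∉ (F : Filter X) := by
      intro a ha
      have := h a ha
      unfold PhiConv at this
      push_neg at this
      obtain ⟨U, hU, haU, hnS⟩ := this
      exact ⟨U, hU, haU, fun hmem => (hnS (φ₂ U) hmem) (subset_refl _)⟩
    choose! U hUopen haU hUF using key
    set 𝒰 : Set (Set X) := U '' A with h𝒰
    have hcov : A ⊆ ⋃₀ 𝒰 := fun a ha => ⟨U a, ⟨a, ha, rfl⟩, haU a ha⟩
    have hop : ∀ V ∈ 𝒰, PhiOpen φ₁ V := by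
      rintro V ⟨a, ha, rfl⟩; exact hUopen a ha
    obtain ⟨𝒰', h𝒰'sub, h𝒰'fin, hA𝒰'⟩ := hc 𝒰 hop hcov
    -- each (φ₂ V)ᶜ for V ∈ 𝒰' is in F
    have hcompl : ∀ V ∈ 𝒰', (φ₂ V)ᶜ ∈ (F : Filter X) := by
      intro V hV
      obtain ⟨a, ha, rfl⟩ := h𝒰'sub hV
      exact (Ultrafilter.compl_mem_iff_notMem).2 (hUF a ha)
    have hinter : (⋂ V ∈ 𝒰', (φ₂ V)ᶜ) ∈ (F : Filter X) :=
      (Filter.biInter_mem h𝒰'fin).2 hcompl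
    obtain ⟨x, hx1, hx2⟩ := hmeet _ hinter
    have : x ∈ ⋃ V ∈ 𝒰', φ₂ V := hA𝒰' hx2
    simp only [mem_iUnion] at this
    obtain ⟨V, hV, hxV⟩ := this
    simp only [mem_iInter, mem_compl_iff] at hx1
    exact hx1 V hV hxV
  · intro h 𝒰 hop hcov
    by_contra hnc
    push_neg at hnc
    classical
    set B : Set (Set X) := insert A ((fun V => (φ₂ V)ᶜ) '' 𝒰) with hB
    -- representative chooser
    set g : Set X → Set X := fun S =>
      if hS : ∃ V ∈ 𝒰, (φ₂ V)ᶜ = S then hS.choose else ∅ with hg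
    have hgspec : ∀ S, (∃ V ∈ 𝒰, (φ₂ V)ᶜ = S) → g S ∈ 𝒰 ∧ (φ₂ (g S))ᶜ = S := by
      intro S hS
      simp only [hg, dif_pos hS]
      exact hS.choose_spec
    have hgen : (Filter.generate B).NeBot := by
      rw [Filter.generate_neBot_iff]
      intro t hts htfin
      set t' : Set (Set X) := g '' (t ∩ ((fun V => (φ₂ V)ᶜ) '' 𝒰)) with ht'
      have ht'fin : t'.Finite := (htfin.inter_of_left _).image g
      have ht'sub : t' ⊆ 𝒰 := by
        rintro V ⟨S, ⟨hSt, W, hW, hWS⟩, rfl⟩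
        exact (hgspec S ⟨W, hW, hWS⟩).1
      have hnot : ¬ A ⊆ ⋃ V ∈ t', φ₂ V := fun hsub =>
        (hnc t' ht'sub ht'fin hsub).elim
      rw [not_subset] at hnot
      obtain ⟨x, hxA, hxn⟩ := hnot
      refine ⟨x, fun S hS => ?_⟩
      rcases hts hS with hSA | ⟨V, hV, rfl⟩
      · exact hSA ▸ hxA
      · have hex : ∃ W ∈ 𝒰, (φ₂ W)ᶜ = (φ₂ V)ᶜ := ⟨V, hV, rfl⟩
        have hmem : g ((φ₂ V)ᶜ) ∈ t' := ⟨(φ₂ V)ᶜ, ⟨hS, V, hV, rfl⟩, rfl⟩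
        have := (hgspec _ hex).2
        simp only [mem_iUnion, not_exists] at hxn
        have hx : x ∉ φ₂ (g ((φ₂ V)ᶜ)) := fun hc => hxn _ hmem hc
        show x ∈ (φ₂ V)ᶜ
        rw [← this]; exact hx
    haveI := hgen
    set F : Ultrafilter X := Ultrafilter.of (Filter.generate B) with hF
    have hle : (F : Filter X) ≤ Filter.generate B := Ultrafilter.of_le _
    have hAF : A ∈ (F : Filter X) := hle (Filter.mem_generate_of_mem (mem_insert _ _))
    have hmeet : ∀ S ∈ (F : Filter X), (S ∩ A).Nonempty := fun S hS =>
      Filter.nonempty_of_mem (Filter.inter_mem hS hAF)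
    obtain ⟨a, haA, hconv⟩ := h F hmeet
    obtain ⟨V, hV𝒰, haV⟩ := hcov haA
    obtain ⟨S, hSF, hSV⟩ := hconv V (hop V hV𝒰) haV
    have h1 : φ₂ V ∈ (F : Filter X) := Filter.mem_of_superset hSF hSV
    have h2 : (φ₂ V)ᶜ ∈ (F : Filter X) :=
      hle (Filter.mem_generate_of_mem (mem_insert_of_mem _ ⟨V, hV𝒰, rfl⟩))
    have := Filter.inter_mem h1 h2
    rw [inter_compl_self] at this
    exact (Filter.empty_notMem _) this
end

section
/- Let (X,τ) be a topological space and φ₁, φ₂ operations on X such that φ₁ is monotone (A ⊆ B implies φ₁(A) ⊆ φ₁(B)) and φ₂(U ∪ V) = φ₂(U) ∪ φ₂(V) for all φ₁-open sets U, V. Then for A ⊆ X the following are equivalent: (a) A is φ₁₂-compact; (b) every filterbase ℱ_b consisting of sets of the form X ∖ φ₂(U) with U φ₁-open, such that every member of ℱ_b meets A, φ₁₂-accumulates to some point of A (i.e., there is a ∈ A with a ∈ φ₁₂cl F for every F ∈ ℱ_b). -/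
open Set

lemma aux_sUnion_open {X : Type*} (φ₁ : Set X → Set X)
    (hmono : ∀ A B : Set X, A ⊆ B → φ₁ A ⊆ φ₁ B)
    (S : Set (Set X)) (h : ∀ U ∈ S, PhiOpen φ₁ U) : PhiOpen φ₁ (⋃₀ S) := by
  intro x hx
  obtain ⟨U, hU, hxU⟩ := hx
  exact hmono U (⋃₀ S) (subset_sUnion_of_mem hU) (h U hU hxU)

lemma aux_phi2_sUnion {X : Type*} [TopologicalSpace X] (φ₁ φ₂ : Set X → Set X)
    (h₂ : IsOperation φ₂)
    (hmono : ∀ A B : Set X, A ⊆ B → φ₁ A ⊆ φ₁ B)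
    (hunion : ∀ U V : Set X, PhiOpen φ₁ U → PhiOpen φ₁ V → φ₂ (U ∪ V) = φ₂ U ∪ φ₂ V)
    (S : Set (Set X)) (hfin : S.Finite) :
    (∀ U ∈ S, PhiOpen φ₁ U) → φ₂ (⋃₀ S) = ⋃ U ∈ S, φ₂ U := by
  refine Set.Finite.induction_on (motive := fun S _ => (∀ U ∈ S, PhiOpen φ₁ U) → φ₂ (⋃₀ S) = ⋃ U ∈ S, φ₂ U) S hfin (fun _ => by simp [h₂.2]) ?_
  intro V T hV hTfin ih hop
  have hVop : PhiOpen φ₁ V := hop V (mem_insert _ _)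
  have hTop : ∀ U ∈ T, PhiOpen φ₁ U := fun U hU => hop U (mem_insert_of_mem _ hU)
  have hTopen : PhiOpen φ₁ (⋃₀ T) := aux_sUnion_open φ₁ hmono T hTop
  rw [sUnion_insert, hunion V (⋃₀ T) hVop hTopen, ih hTop]
  simp [biUnion_insert]

lemma aux_lb {X : Type*} (ℱb : Set (Set X)) (hne : ℱb.Nonempty)
    (hdir : ∀ F₁ ∈ ℱb, ∀ F₂ ∈ ℱb, ∃ F₃ ∈ ℱb, F₃ ⊆ F₁ ∩ F₂)
    (S : Set (Set X)) (hfin : S.Finite) :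
    S ⊆ ℱb → ∃ F ∈ ℱb, ∀ G ∈ S, F ⊆ G := by
  refine Set.Finite.induction_on (motive := fun S _ => S ⊆ ℱb → ∃ F ∈ ℱb, ∀ G ∈ S, F ⊆ G) S hfin ?_ ?_
  · intro _
    obtain ⟨F, hF⟩ := hne
    exact ⟨F, hF, by simp⟩
  · intro V T hV hTfin ih hsub
    obtain ⟨F, hF, hFsub⟩ := ih (fun U hU => hsub (mem_insert_of_mem _ hU))
    obtain ⟨F', hF', hF'sub⟩ := hdir F hF V (hsub (mem_insert _ _))
    refine ⟨F', hF', ?_⟩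
    intro G hG
    rcases hG with rfl | hG
    · exact hF'sub.trans inter_subset_right
    · exact (hF'sub.trans inter_subset_left).trans (hFsub G hG)

/-- If `φ₁` is monotone and `φ₂ (U ∪ V) = φ₂ U ∪ φ₂ V` for all `φ₁`-open
`U`, `V`, then `A` is `φ₁₂`-compact iff every filterbase consisting of sets of the form
`X \ φ₂ U` (`U` `φ₁`-open), each member of which meets `A`, `φ₁₂`-accumulates to some
point of `A`. -/
theorem stmt_19 {X : Type*} [TopologicalSpace X] (φ₁ φ₂ : Set X → Set X)
    (h₁ : IsOperation φ₁) (h₂ : IsOperation φ₂)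
    (hmono : ∀ A B : Set X, A ⊆ B → φ₁ A ⊆ φ₁ B)
    (hunion : ∀ U V : Set X, PhiOpen φ₁ U → PhiOpen φ₁ V → φ₂ (U ∪ V) = φ₂ U ∪ φ₂ V)
    (A : Set X) :
    PhiCompact φ₁ φ₂ A ↔
      ∀ ℱb : Set (Set X),
        ℱb.Nonempty →
        (∀ F ∈ ℱb, F.Nonempty) →
        (∀ F₁ ∈ ℱb, ∀ F₂ ∈ ℱb, ∃ F₃ ∈ ℱb, F₃ ⊆ F₁ ∩ F₂) →
        (∀ F ∈ ℱb, ∃ U : Set X, PhiOpen φ₁ U ∧ F = (φ₂ U)ᶜ) →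
        (∀ F ∈ ℱb, (F ∩ A).Nonempty) →
        ∃ a ∈ A, ∀ F ∈ ℱb, a ∈ PhiCl φ₁ φ₂ F := by
  constructor
  · -- compact → accumulation
    intro hc ℱb hne hFne hdir hform hmeet
    by_contra hno
    push_neg at hno
    -- for each a ∈ A, pick F ∈ ℱb and φ₁-open U ∋ a with φ₂ U ∩ F = ∅
    set 𝒰 : Set (Set X) := {U | PhiOpen φ₁ U ∧ ∃ F ∈ ℱb, φ₂ U ∩ F = ∅} with h𝒰
    have hcov : A ⊆ ⋃₀ 𝒰 := by
      intro a ha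
      obtain ⟨F, hF, hacc⟩ := hno a ha
      simp only [PhiCl, mem_setOf_eq, not_forall] at hacc
      obtain ⟨U, hUop, haU, hemp⟩ := hacc
      rw [not_nonempty_iff_eq_empty] at hemp
      exact ⟨U, ⟨hUop, F, hF, hemp⟩, haU⟩
    obtain ⟨𝒰', h𝒰'sub, h𝒰'fin, h𝒰'cov⟩ := hc 𝒰 (fun U hU => hU.1) hcov
    have hsel : ∀ U : Set X, ∃ F, U ∈ 𝒰' → F ∈ ℱb ∧ φ₂ U ∩ F = ∅ := by
      intro U
      by_cases hU : U ∈ 𝒰'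
      · obtain ⟨F, hF, hFe⟩ := (h𝒰'sub hU).2
        exact ⟨F, fun _ => ⟨hF, hFe⟩⟩
      · exact ⟨∅, fun h => absurd h hU⟩
    choose f hf using hsel
    have hSsub : f '' 𝒰' ⊆ ℱb := by
      rintro _ ⟨U, hU, rfl⟩; exact (hf U hU).1
    obtain ⟨F, hF, hFsub⟩ := aux_lb ℱb hne hdir (f '' 𝒰') (h𝒰'fin.image f) hSsub
    obtain ⟨x, hxF, hxA⟩ := hmeet F hF
    obtain ⟨U, hU, hxU⟩ := by simpa using h𝒰'cov hxA
    have hxf : x ∈ f U := hFsub (f U) ⟨U, hU, rfl⟩ hxF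
    have : x ∈ φ₂ U ∩ f U := ⟨hxU, hxf⟩
    rw [(hf U hU).2] at this
    exact this
  · -- accumulation → compact
    intro h 𝒰 hop hcov
    by_contra hnc
    push_neg at hnc
    set ℱb : Set (Set X) :=
      {S | ∃ 𝒰' : Set (Set X), 𝒰' ⊆ 𝒰 ∧ 𝒰'.Finite ∧ S = (φ₂ (⋃₀ 𝒰'))ᶜ} with hℱb
    have key : ∀ 𝒰' : Set (Set X), 𝒰' ⊆ 𝒰 → 𝒰'.Finite →
        φ₂ (⋃₀ 𝒰') = ⋃ U ∈ 𝒰', φ₂ U := fun 𝒰' hsub hfin =>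
      aux_phi2_sUnion φ₁ φ₂ h₂ hmono hunion 𝒰' hfin (fun U hU => hop U (hsub hU))
    have hmeet : ∀ F ∈ ℱb, (F ∩ A).Nonempty := by
      rintro F ⟨𝒰', hsub, hfin, rfl⟩
      have := hnc 𝒰' hsub hfin
      rw [← key 𝒰' hsub hfin] at this
      obtain ⟨x, hxA, hx⟩ := not_subset.mp this
      exact ⟨x, hx, hxA⟩
    have hne : ℱb.Nonempty :=
      ⟨(φ₂ (⋃₀ (∅ : Set (Set X))))ᶜ, ∅, empty_subset _, finite_empty, rfl⟩
    have hFne : ∀ F ∈ ℱb, F.Nonempty := fun F hF => ((hmeet F hF).mono inter_subset_left)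
    have hdir : ∀ F₁ ∈ ℱb, ∀ F₂ ∈ ℱb, ∃ F₃ ∈ ℱb, F₃ ⊆ F₁ ∩ F₂ := by
      rintro F₁ ⟨𝒰₁, hs₁, hf₁, rfl⟩ F₂ ⟨𝒰₂, hs₂, hf₂, rfl⟩
      refine ⟨(φ₂ (⋃₀ (𝒰₁ ∪ 𝒰₂)))ᶜ, ⟨𝒰₁ ∪ 𝒰₂, union_subset hs₁ hs₂, hf₁.union hf₂, rfl⟩, ?_⟩
      rw [key _ (union_subset hs₁ hs₂) (hf₁.union hf₂), key _ hs₁ hf₁, key _ hs₂ hf₂]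
      apply subset_inter <;> apply compl_subset_compl.mpr <;>
        exact biUnion_subset_biUnion_left (by simp)
    have hform : ∀ F ∈ ℱb, ∃ U : Set X, PhiOpen φ₁ U ∧ F = (φ₂ U)ᶜ := by
      rintro F ⟨𝒰', hsub, hfin, rfl⟩
      exact ⟨⋃₀ 𝒰', aux_sUnion_open φ₁ hmono 𝒰' (fun U hU => hop U (hsub hU)), rfl⟩
    obtain ⟨a, haA, hacc⟩ := h ℱb hne hFne hdir hform hmeet
    obtain ⟨U₀, hU₀, haU₀⟩ := hcov haA
    have hFmem : (φ₂ U₀)ᶜ ∈ ℱb := by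
      refine ⟨{U₀}, singleton_subset_iff.mpr hU₀, finite_singleton _, ?_⟩
      rw [sUnion_singleton]
    have := hacc _ hFmem U₀ (hop U₀ hU₀) haU₀
    simp [inter_compl_self] at this
end
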